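/- Let E be a finite nonempty index set, let β : E → (0,∞), and let w : E → [0,∞) with w_j > 0 for at least one j ∈ E. Then there exists a constant C > 0 (depending only on E, β and w) such that for every family x : E → (0,∞), ∑_{j ∈ E} w_j · K̂₁(√(2β_j) x_j) / ( x_j · ∑_{k ∈ E} w_k K₀(√(2β_k) x_k) ) ≤ C · ( ∑_{j ∈ E} 𝟙{√(2β_j) x_j ≤ 1/2} / ( x_j K₀(√(2β_j) x_j) ) + 1 ). -/

import Mathlib

open MeasureTheory Filter Set Topology

/-- Macdonald function `K₀`, via its integral representation. -/
noncomputable def K0 (x : ℝ) : ℝ := ∫ t in Set.Ioi (0 : ℝ), Real.exp (-x * Real.cosh t)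

/-- Macdonald function `K₁`, via its integral representation. -/
noncomputable def K1 (x : ℝ) : ℝ :=
  ∫ t in Set.Ioi (0 : ℝ), Real.exp (-x * Real.cosh t) * Real.cosh t

/-- `K̂₁(x) = x K₁(x)`. -/
noncomputable def hatK1 (x : ℝ) : ℝ := x * K1 x

namespace MacdonaldAux

lemma tendsto_cosh_atTop : Tendsto Real.cosh atTop atTop := by
  apply tendsto_atTop_mono (fun t => ?_) (Real.tendsto_exp_atTop.atTop_div_const (by norm_num : (0:ℝ) < 2))
  rw [Real.cosh_eq]
  have := (Real.exp_pos (-t)).le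
  linarith

lemma expNegCosh_tendsto {y : ℝ} (hy : 0 < y) :
    Tendsto (fun t => Real.exp (-y * Real.cosh t)) atTop (𝓝 0) := by
  apply Real.tendsto_exp_atBot.comp
  exact Tendsto.const_mul_atTop_of_neg (by linarith : -y < 0) tendsto_cosh_atTop

lemma integrableOn_base {y : ℝ} (hy : 0 < y) :
    IntegrableOn (fun t => Real.exp t * Real.exp (-(y/2) * Real.exp t)) (Ioi 0) := by
  have hderiv : ∀ t ∈ Ici (0:ℝ), HasDerivAt (fun t => -(2/y) * Real.exp (-(y/2) * Real.exp t))
      (Real.exp t * Real.exp (-(y/2) * Real.exp t)) t := by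
    intro t _
    have h1 : HasDerivAt (fun t : ℝ => -(y/2) * Real.exp t) (-(y/2) * Real.exp t) t :=
      (Real.hasDerivAt_exp t).const_mul _
    have h3 := h1.exp.const_mul (-(2/y))
    refine h3.congr_deriv ?_
    have hk : (2/y) * (y/2) = 1 := by rw [div_mul_div_comm, mul_comm 2 y, div_self (by positivity)]
    linear_combination ((Real.exp t * Real.exp (-(y/2) * Real.exp t))) * hk
  have hg : Tendsto (fun t => -(2/y) * Real.exp (-(y/2) * Real.exp t)) atTop (𝓝 0) := by
    have h : Tendsto (fun t : ℝ => -(y/2) * Real.exp t) atTop atBot :=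
      Tendsto.const_mul_atTop_of_neg (by linarith : -(y/2) < 0) Real.tendsto_exp_atTop
    have := (Real.tendsto_exp_atBot.comp h).const_mul (-(2/y))
    simpa using this
  exact integrableOn_Ioi_deriv_of_nonneg' hderiv (fun t _ => by positivity) hg

lemma bound_pt {y t : ℝ} (hy : 0 < y) (ht : 0 ≤ t) {c : ℝ} (hc : 0 ≤ c)
    (hce : c ≤ Real.exp t) :
    ‖Real.exp (-y * Real.cosh t) * c‖ ≤ Real.exp t * Real.exp (-(y/2) * Real.exp t) := by
  have h1 : Real.exp (-y * Real.cosh t) ≤ Real.exp (-(y/2) * Real.exp t) := by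
    apply Real.exp_le_exp.2
    rw [Real.cosh_eq]
    have := (Real.exp_pos (-t)).le
    nlinarith
  rw [Real.norm_eq_abs, abs_of_nonneg (by positivity)]
  calc Real.exp (-y * Real.cosh t) * c ≤ Real.exp (-(y/2) * Real.exp t) * Real.exp t :=
        mul_le_mul h1 hce hc (Real.exp_pos _).le
    _ = _ := mul_comm _ _

lemma integrableOn_f {y : ℝ} (hy : 0 < y) :
    IntegrableOn (fun t => Real.exp (-y * Real.cosh t)) (Ioi 0) := by
  refine (integrableOn_base hy).mono' ?_ ?_
  · exact (Real.continuous_exp.comp ((continuous_const.mul Real.continuous_cosh))).aestronglyMeasurable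
  · rw [ae_restrict_iff' measurableSet_Ioi]
    refine ae_of_all _ fun t ht => ?_
    have := bound_pt hy (le_of_lt ht) (zero_le_one) (Real.one_le_exp (le_of_lt ht))
    simpa using this

lemma integrableOn_g {y : ℝ} (hy : 0 < y) :
    IntegrableOn (fun t => Real.exp (-y * Real.cosh t) * Real.cosh t) (Ioi 0) := by
  refine (integrableOn_base hy).mono' ?_ ?_
  · exact ((Real.continuous_exp.comp ((continuous_const.mul Real.continuous_cosh))).mul
      Real.continuous_cosh).aestronglyMeasurable
  · rw [ae_restrict_iff' measurableSet_Ioi]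
    refine ae_of_all _ fun t ht => ?_
    have hcosh : Real.cosh t ≤ Real.exp t := by
      rw [Real.cosh_eq]
      have h1 : Real.exp (-t) ≤ Real.exp t := Real.exp_le_exp.2 (by linarith [le_of_lt (mem_Ioi.1 ht)])
      linarith
    exact bound_pt hy (le_of_lt ht) (Real.cosh_pos t).le hcosh

lemma integrableOn_h {y : ℝ} (hy : 0 < y) :
    IntegrableOn (fun t => Real.exp (-y * Real.cosh t) * Real.sinh t) (Ioi 0) := by
  refine (integrableOn_base hy).mono' ?_ ?_
  · exact ((Real.continuous_exp.comp ((continuous_const.mul Real.continuous_cosh))).mul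
      Real.continuous_sinh).aestronglyMeasurable
  · rw [ae_restrict_iff' measurableSet_Ioi]
    refine ae_of_all _ fun t ht => ?_
    have hs0 : 0 ≤ Real.sinh t := Real.sinh_nonneg_iff.2 (le_of_lt ht)
    have hsinh : Real.sinh t ≤ Real.exp t := by
      rw [Real.sinh_eq]
      have := (Real.exp_pos (-t)).le
      have := (Real.exp_pos t).le
      linarith
    exact bound_pt hy (le_of_lt ht) hs0 hsinh

lemma K0_nonneg {y : ℝ} (_hy : 0 < y) : 0 ≤ K0 y :=
  setIntegral_nonneg measurableSet_Ioi fun t _ => (Real.exp_pos _).le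

lemma K1_nonneg {y : ℝ} (_hy : 0 < y) : 0 ≤ K1 y :=
  setIntegral_nonneg measurableSet_Ioi fun t _ =>
    mul_nonneg (Real.exp_pos _).le (Real.cosh_pos t).le

lemma K0_pos {y : ℝ} (hy : 0 < y) : 0 < K0 y := by
  have h1 : Real.exp (-y * Real.cosh 1) * (volume (Ioo (0:ℝ) 1)).toReal
      ≤ ∫ t in Ioo (0:ℝ) 1, Real.exp (-y * Real.cosh t) := by
    apply setIntegral_ge_of_const_le_real measurableSet_Ioo (by simp)
    · intro t ht
      apply Real.exp_le_exp.2
      have hct : Real.cosh t ≤ Real.cosh 1 := by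
        rw [Real.cosh_le_cosh]
        rw [abs_of_nonneg (le_of_lt ht.1), abs_one]
        exact le_of_lt ht.2
      nlinarith
    · exact (integrableOn_f hy).mono_set Ioo_subset_Ioi_self
  have h2 : ∫ t in Ioo (0:ℝ) 1, Real.exp (-y * Real.cosh t) ≤ K0 y := by
    apply setIntegral_mono_set (integrableOn_f hy)
    · exact ae_of_all _ fun t => (Real.exp_pos _).le
    · exact HasSubset.Subset.eventuallyLE Ioo_subset_Ioi_self
  have h3 : (volume (Ioo (0:ℝ) 1)).toReal = 1 := by simp
  rw [h3, mul_one] at h1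
  calc (0:ℝ) < Real.exp (-y * Real.cosh 1) := Real.exp_pos _
    _ ≤ _ := le_trans h1 h2

lemma cosh_le_one_add {s : ℝ} (hs : 0 ≤ s) : Real.cosh s ≤ 1 + s^2 * Real.exp s := by
  rw [Real.cosh_eq]
  have h1 : Real.exp s * Real.exp (-s) = 1 := by rw [← Real.exp_add]; simp
  have h2 : -s + 1 ≤ Real.exp (-s) := Real.add_one_le_exp (-s)
  have h3 : Real.exp s - 1 ≤ s * Real.exp s := by nlinarith [Real.exp_pos s]
  have h4 : (1:ℝ) ≤ Real.exp s := Real.one_le_exp hs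
  nlinarith [Real.exp_pos (-s), Real.exp_pos s, sq_nonneg (Real.exp s - 1),
    mul_nonneg (mul_nonneg hs hs) (Real.exp_pos s).le]

lemma K0_lower {y : ℝ} (hy : 1/2 ≤ y) : Real.exp (-(y+1)) / (2 * Real.sqrt y) ≤ K0 y := by
  have hy0 : 0 < y := by linarith
  have hsy : (0.7:ℝ) ≤ Real.sqrt y := by
    rw [Real.le_sqrt (by norm_num) hy0.le]
    nlinarith
  have hsy0 : 0 < Real.sqrt y := by linarith
  set δ : ℝ := 1 / (2 * Real.sqrt y) with hδ_def
  have hδ0 : 0 < δ := by positivity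
  have hδ1 : δ ≤ 1 := by
    rw [hδ_def, div_le_one (by linarith)]
    linarith
  have hδsq : δ^2 = 1/(4*y) := by
    rw [hδ_def]
    rw [div_pow, mul_pow, Real.sq_sqrt hy0.le]
    norm_num
  have h1 : Real.exp (-(y+1)) * (volume (Ioo (0:ℝ) δ)).toReal
      ≤ ∫ t in Ioo (0:ℝ) δ, Real.exp (-y * Real.cosh t) := by
    apply setIntegral_ge_of_const_le_real measurableSet_Ioo (by simp)
    · intro t ht
      apply Real.exp_le_exp.2
      have ht0 : 0 ≤ t := le_of_lt ht.1
      have htδ : t ≤ δ := le_of_lt ht.2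
      have hc : Real.cosh t ≤ 1 + t^2 * Real.exp t := cosh_le_one_add ht0
      have he : Real.exp t ≤ Real.exp 1 := Real.exp_le_exp.2 (by linarith)
      have he1 : Real.exp 1 < 2.7182818286 := Real.exp_one_lt_d9
      have ht2 : t^2 ≤ δ^2 := by nlinarith
      have hyd : y * δ^2 = 1/4 := by rw [hδsq]; field_simp
      have hq : t^2 * Real.exp t ≤ 3 * δ^2 := by nlinarith [Real.exp_pos t, sq_nonneg t]
      have : y * Real.cosh t ≤ y + 1 := by
        nlinarith [mul_le_mul_of_nonneg_left hc hy0.le,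
          mul_le_mul_of_nonneg_left hq hy0.le]
      linarith
    · exact (integrableOn_f hy0).mono_set Ioo_subset_Ioi_self
  have h2 : ∫ t in Ioo (0:ℝ) δ, Real.exp (-y * Real.cosh t) ≤ K0 y := by
    apply setIntegral_mono_set (integrableOn_f hy0)
    · exact ae_of_all _ fun t => (Real.exp_pos _).le
    · exact HasSubset.Subset.eventuallyLE Ioo_subset_Ioi_self
  have h3 : (volume (Ioo (0:ℝ) δ)).toReal = δ := by
    rw [Real.volume_Ioo]
    simp [ENNReal.toReal_ofReal hδ0.le]
  rw [h3] at h1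
  calc Real.exp (-(y+1)) / (2 * Real.sqrt y) = Real.exp (-(y+1)) * δ := by
        rw [hδ_def]; ring
    _ ≤ _ := le_trans h1 h2

lemma integral_sinh {y : ℝ} (hy : 0 < y) :
    ∫ t in Ioi (0:ℝ), Real.exp (-y * Real.cosh t) * Real.sinh t = Real.exp (-y) / y := by
  have hderiv : ∀ t ∈ Ici (0:ℝ),
      HasDerivAt (fun t => -(1/y) * Real.exp (-y * Real.cosh t))
        (Real.exp (-y * Real.cosh t) * Real.sinh t) t := by
    intro t _
    have h1 : HasDerivAt (fun t : ℝ => -y * Real.cosh t) (-y * Real.sinh t) t :=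
      (Real.hasDerivAt_cosh t).const_mul (-y)
    have h2 := h1.exp.const_mul (-(1/y))
    refine h2.congr_deriv ?_
    have hk : (1/y) * y = 1 := one_div_mul_cancel hy.ne'
    linear_combination ((Real.exp (-y * Real.cosh t) * Real.sinh t)) * hk
  have htend : Tendsto (fun t => -(1/y) * Real.exp (-y * Real.cosh t)) atTop (𝓝 0) := by
    have := (expNegCosh_tendsto hy).const_mul (-(1/y))
    simpa using this
  have := integral_Ioi_of_hasDerivAt_of_tendsto' hderiv (integrableOn_h hy) htend
  rw [this]
  rw [Real.cosh_zero]
  field_simp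
  ring

lemma K1_le {y : ℝ} (hy : 0 < y) : K1 y ≤ K0 y + Real.exp (-y) / y := by
  have hmono : K1 y ≤ ∫ t in Ioi (0:ℝ),
      (Real.exp (-y * Real.cosh t) + Real.exp (-y * Real.cosh t) * Real.sinh t) := by
    apply setIntegral_mono_on (integrableOn_g hy)
      ((integrableOn_f hy).add (integrableOn_h hy)) measurableSet_Ioi
    intro t ht
    have h1 : Real.cosh t ≤ 1 + Real.sinh t := by
      have h2 := Real.cosh_sub_sinh t
      have h3 : Real.exp (-t) ≤ 1 := by
        rw [← Real.exp_zero]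
        exact Real.exp_le_exp.2 (by linarith [le_of_lt (mem_Ioi.1 ht)])
      linarith
    have h4 : Real.exp (-y * Real.cosh t) * Real.cosh t
        ≤ Real.exp (-y * Real.cosh t) * (1 + Real.sinh t) :=
      mul_le_mul_of_nonneg_left h1 (Real.exp_pos _).le
    calc Real.exp (-y * Real.cosh t) * Real.cosh t
        ≤ Real.exp (-y * Real.cosh t) + Real.exp (-y * Real.cosh t) * Real.sinh t := by
          nlinarith [h4]
      _ = _ := by simp
  rw [integral_add (integrableOn_f hy) (integrableOn_h hy), integral_sinh hy] at hmono
  exact hmono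

lemma hatK1_nonneg {y : ℝ} (hy : 0 < y) : 0 ≤ hatK1 y :=
  mul_nonneg hy.le (K1_nonneg hy)

end MacdonaldAux

set_option maxHeartbeats 1000000 in
open MacdonaldAux in
/-- The bound (3.23) from the proof of Lemma 3.11: for a finite nonempty index set,
`β : E → (0,∞)` and nonzero nonnegative weights `w`, there is `C > 0` such that for
all positive families `x`,
`∑_j w_j K̂₁(√(2β_j) x_j) / (x_j ∑_k w_k K₀(√(2β_k) x_k))
  ≤ C (∑_j 𝟙{√(2β_j) x_j ≤ 1/2}/(x_j K₀(√(2β_j) x_j)) + 1)`. -/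
theorem hatK1_over_sumK0_bound {ι : Type*} [Fintype ι] [Nonempty ι]
    (β w : ι → ℝ) (hβ : ∀ j, 0 < β j) (hw : ∀ j, 0 ≤ w j) (hw' : ∃ j, 0 < w j) :
    ∃ C : ℝ, 0 < C ∧ ∀ x : ι → ℝ, (∀ j, 0 < x j) →
      ∑ j, w j * hatK1 (Real.sqrt (2 * β j) * x j)
          / (x j * ∑ k, w k * K0 (Real.sqrt (2 * β k) * x k))
        ≤ C * ((∑ j, if Real.sqrt (2 * β j) * x j ≤ 1 / 2
            then 1 / (x j * K0 (Real.sqrt (2 * β j) * x j)) else 0) + 1) := by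
  set a : ι → ℝ := fun j => Real.sqrt (2 * β j) with ha_def
  have haeq : ∀ j, Real.sqrt (2 * β j) = a j := fun j => by rw [ha_def]
  have ha : ∀ j, 0 < a j := fun j => by
    rw [← haeq]; exact Real.sqrt_pos.2 (by linarith [hβ j])
  have hA : 0 ≤ ∑ j, a j := Finset.sum_nonneg fun j _ => (ha j).le
  refine ⟨11 * ∑ j, a j + 1, by linarith, ?_⟩
  intro x hx
  simp only [haeq]
  have hy : ∀ j, 0 < a j * x j := fun j => mul_pos (ha j) (hx j)
  set S := ∑ k, w k * K0 (a k * x k) with hS_def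
  have key : ∀ j, w j * hatK1 (a j * x j) / (x j * S)
      ≤ 11 * a j + (if a j * x j ≤ 1/2 then 1 / (x j * K0 (a j * x j)) else 0) := by
    intro j
    have hK0pos := K0_pos (hy j)
    have hxj : 0 < x j := hx j
    have hind : 0 ≤ (if a j * x j ≤ 1/2 then 1 / (x j * K0 (a j * x j)) else 0) := by
      split
      · positivity
      · exact le_rfl
    rcases eq_or_lt_of_le (hw j) with hwj | hwj
    · rw [← hwj]
      have haj := (ha j).le
      simp only [zero_mul, zero_div]
      linarith
    · have hSlb : w j * K0 (a j * x j) ≤ S :=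
        Finset.single_le_sum (f := fun k => w k * K0 (a k * x k))
          (fun k _ => mul_nonneg (hw k) (K0_nonneg (hy k))) (Finset.mem_univ j)
      have hSpos : 0 < S := lt_of_lt_of_le (by positivity) hSlb
      have hnum : 0 ≤ w j * hatK1 (a j * x j) := mul_nonneg hwj.le (hatK1_nonneg (hy j))
      have step1 : w j * hatK1 (a j * x j) / (x j * S)
          ≤ hatK1 (a j * x j) / (x j * K0 (a j * x j)) := by
        have h1 : w j * hatK1 (a j * x j) / (x j * S)
            ≤ w j * hatK1 (a j * x j) / (x j * (w j * K0 (a j * x j))) := by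
          exact div_le_div_of_nonneg_left hnum (mul_pos (hx j) (mul_pos hwj hK0pos))
            (mul_le_mul_of_nonneg_left hSlb (hx j).le)
        have h2 : w j * hatK1 (a j * x j) / (x j * (w j * K0 (a j * x j)))
            = hatK1 (a j * x j) / (x j * K0 (a j * x j)) := by
          field_simp
        linarith
      have step2 : hatK1 (a j * x j) / (x j * K0 (a j * x j))
          ≤ a j + Real.exp (-(a j * x j)) / (x j * K0 (a j * x j)) := by
        rw [hatK1]
        have hK1le := K1_le (hy j)
        have hnum2 : (a j * x j) * K1 (a j * x j)
            ≤ (a j * x j) * K0 (a j * x j) + Real.exp (-(a j * x j)) := by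
          have h := mul_le_mul_of_nonneg_left hK1le (hy j).le
          rw [mul_add, mul_div_cancel₀ _ (ne_of_gt (hy j))] at h
          linarith
        have hd : 0 < x j * K0 (a j * x j) := mul_pos (hx j) hK0pos
        calc (a j * x j) * K1 (a j * x j) / (x j * K0 (a j * x j))
            ≤ ((a j * x j) * K0 (a j * x j) + Real.exp (-(a j * x j)))
              / (x j * K0 (a j * x j)) := div_le_div_of_nonneg_right hnum2 hd.le
          _ = a j + Real.exp (-(a j * x j)) / (x j * K0 (a j * x j)) := by
              field_simp
      by_cases hsmall : a j * x j ≤ 1/2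
      · rw [if_pos hsmall]
        have hde : Real.exp (-(a j * x j)) / (x j * K0 (a j * x j))
            ≤ 1 / (x j * K0 (a j * x j)) := by
          apply div_le_div_of_nonneg_right _ (mul_pos (hx j) hK0pos).le
          rw [← Real.exp_zero]
          exact Real.exp_le_exp.2 (by linarith [hy j])
        have haj := (ha j).le
        linarith
      · rw [if_neg hsmall]
        push_neg at hsmall
        have hmain : Real.exp (-(a j * x j)) / (x j * K0 (a j * x j)) ≤ 10 * a j := by
          set Y := a j * x j with hY_def
          have hY2 : 1/2 ≤ Y := hsmall.le
          have hKlb := K0_lower hY2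
          have hsy : (0.7:ℝ) ≤ Real.sqrt Y := by
            rw [Real.le_sqrt (by norm_num) (hy j).le]
            nlinarith
          have hsy0 : 0 < Real.sqrt Y := by linarith
          rw [div_le_iff₀ (mul_pos (hx j) hK0pos)]
          have hxK : Y * K0 Y = a j * (x j * K0 Y) := by
            rw [hY_def]; ring
          have hss : Real.sqrt Y * Real.sqrt Y = Y := Real.mul_self_sqrt (hy j).le
          have hlb2 : Real.sqrt Y / 2 * Real.exp (-(Y+1)) ≤ Y * K0 Y := by
            have h := mul_le_mul_of_nonneg_left hKlb (hy j).le
            have heq : Real.sqrt Y / 2 * Real.exp (-(Y+1))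
                = Y * (Real.exp (-(Y+1)) / (2 * Real.sqrt Y)) := by
              rw [mul_div_assoc', eq_div_iff (by positivity : (0:ℝ) < 2 * Real.sqrt Y).ne']
              linear_combination Real.exp (-(Y+1)) * hss
            linarith [heq ▸ h]
          have hexp : Real.exp (-Y) ≤ 10 * (Real.sqrt Y / 2 * Real.exp (-(Y+1))) := by
            have he1 : Real.exp 1 < 2.7182818286 := Real.exp_one_lt_d9
            have hsplit : Real.exp (-(Y+1)) = Real.exp (-Y) * Real.exp (-1) := by
              rw [← Real.exp_add]; ring_nf
            rw [hsplit]
            have hinv : Real.exp (-1) * Real.exp 1 = 1 := by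
              rw [← Real.exp_add]; simp
            have hep : 0 < Real.exp (-Y) := Real.exp_pos _
            have hem : 0 < Real.exp (-1:ℝ) := Real.exp_pos _
            have h35 : Real.exp 1 ≤ 3.5 := by linarith
            have h1 : 1 ≤ 3.5 * Real.exp (-1:ℝ) := by nlinarith
            have h5 : 1 ≤ 5 * Real.sqrt Y * Real.exp (-1:ℝ) := by nlinarith
            nlinarith [mul_le_mul_of_nonneg_left h5 hep.le]
          calc Real.exp (-Y) ≤ 10 * (Real.sqrt Y / 2 * Real.exp (-(Y+1))) := hexp
            _ ≤ 10 * (Y * K0 Y) := by linarith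
            _ = 10 * (a j * (x j * K0 Y)) := by rw [hxK]
            _ = 10 * a j * (x j * K0 Y) := by ring
        linarith [step1, step2, (ha j).le]
  have hI : 0 ≤ ∑ j, (if a j * x j ≤ 1/2 then 1 / (x j * K0 (a j * x j)) else 0) :=
    Finset.sum_nonneg fun j _ => by
      split
      · have h1 := K0_pos (hy j); have h2 := hx j; positivity
      · exact le_rfl
  calc ∑ j, w j * hatK1 (a j * x j) / (x j * S)
      ≤ ∑ j, (11 * a j + (if a j * x j ≤ 1/2 then 1 / (x j * K0 (a j * x j)) else 0)) :=
        Finset.sum_le_sum fun j _ => key j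
    _ = 11 * (∑ j, a j)
        + ∑ j, (if a j * x j ≤ 1/2 then 1 / (x j * K0 (a j * x j)) else 0) := by
        rw [Finset.sum_add_distrib, Finset.mul_sum]
    _ ≤ (11 * ∑ j, a j + 1)
        * ((∑ j, if a j * x j ≤ 1/2 then 1 / (x j * K0 (a j * x j)) else 0) + 1) := by
        nlinarith [mul_nonneg hA hI]
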